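/- Let a_1,…,a_r ∈ ℝ^n be linearly independent vectors with integer coordinates, and let P_1 denote the orthogonal projection onto the orthogonal complement of span{a_2,…,a_r} inside span{a_1,…,a_r}. If every (r-1)×(r-1) minor of the Gram matrix of (a_1,…,a_r) is bounded in absolute value by C, then ‖P_1(a_1)‖² ≥ 1/C. Consequently, if u = Σ u_i a_i, then u_1² ≤ C·‖u‖². -/

import Mathlib

open Matrix Finset RealInnerProductSpace

set_option maxHeartbeats 1000000


/-- Let `a 0, …, a (r-1) ∈ ℝ^n` be linearly independent vectors with integer
coordinates and let `P₁` be the orthogonal projection onto the orthogonal complement of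
`span {a 1, …, a (r-1)}` (inside `span {a 0, …, a (r-1)}`, equivalently
`P₁ (a 0) = a 0 - proj_{span {a i, i ≠ 0}} (a 0)`).  If every `(r-1) × (r-1)` minor of the
Gram matrix of `(a i)` is bounded in absolute value by `C`, then `‖P₁ (a 0)‖² ≥ 1/C`;
consequently, if `u = ∑ uᵢ aᵢ` then `u₀² ≤ C · ‖u‖²`. -/
theorem stmt_2 (r n : ℕ) (hr : 0 < r) (C : ℝ) (hC : 0 < C)
    (a : Fin r → EuclideanSpace ℝ (Fin n))
    (hint : ∀ i j, ∃ z : ℤ, a i j = (z : ℝ))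
    (hli : LinearIndependent ℝ a)
    (hminor : ∀ f g : Fin (r - 1) → Fin r, StrictMono f → StrictMono g →
      |Matrix.det ((Matrix.of fun i j => (inner ℝ (a i) (a j) : ℝ)).submatrix f g)| ≤ C) :
    (1 / C ≤
      ‖a ⟨0, hr⟩ - (Submodule.orthogonalProjectionOnto
        (Submodule.span ℝ (a '' {i | i ≠ ⟨0, hr⟩})) (a ⟨0, hr⟩) : EuclideanSpace ℝ (Fin n))‖ ^ 2) ∧
    ∀ u : Fin r → ℝ, (u ⟨0, hr⟩) ^ 2 ≤ C * ‖∑ i, u i • a i‖ ^ 2 := by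
  obtain ⟨m, rfl⟩ : ∃ m, r = m + 1 := ⟨r - 1, (Nat.succ_pred_eq_of_pos hr).symm⟩
  show (1 / C ≤
      ‖a 0 - (Submodule.orthogonalProjectionOnto
        (Submodule.span ℝ (a '' {i | i ≠ 0})) (a 0) : EuclideanSpace ℝ (Fin n))‖ ^ 2) ∧
    ∀ u : Fin (m + 1) → ℝ, (u 0) ^ 2 ≤ C * ‖∑ i, u i • a i‖ ^ 2
  set K : Submodule ℝ (EuclideanSpace ℝ (Fin n)) :=
    Submodule.span ℝ (a '' {i | i ≠ 0}) with hK
  set p : EuclideanSpace ℝ (Fin n) := (Submodule.orthogonalProjectionOnto K (a 0) : EuclideanSpace ℝ (Fin n))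
    with hp
  set v : EuclideanSpace ℝ (Fin n) := a 0 - p with hv
  have hpK : p ∈ K := SetLike.coe_mem _
  have hvm : v ∈ Kᗮ := Submodule.sub_starProjection_mem_orthogonal (K := K) (a 0)
  have hvK : ∀ w ∈ K, ⟪v, w⟫ = 0 := fun w hw => by
    rw [real_inner_comm]; exact hvm w hw
  have hva : ∀ i : Fin (m + 1), i ≠ 0 → ⟪v, a i⟫ = 0 := fun i hi =>
    hvK _ (Submodule.subset_span ⟨i, hi, rfl⟩)
  have ha0 : a 0 = v + p := by rw [hv]; abel
  have hva0 : ⟪v, a 0⟫ = ‖v‖ ^ 2 := by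
    rw [ha0, inner_add_right, hvK p hpK, real_inner_self_eq_norm_sq]; ring
  have hvne : v ≠ 0 := by
    intro h
    have : a 0 ∈ K := by rw [ha0, h, zero_add]; exact hpK
    exact hli.notMem_span_image (by simp) this
  have hvpos : (0 : ℝ) < ‖v‖ ^ 2 := pow_pos (norm_pos_iff.mpr hvne) 2
  clear_value K p v
  -- coefficients of p in terms of the a i, i ≠ 0
  have hp' : p ∈ Submodule.span ℝ (Set.range fun i : ({i : Fin (m + 1) | i ≠ 0} : Set (Fin (m + 1))) => a i) := by
    rw [← Set.image_eq_range]; exact hK ▸ hpK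
  obtain ⟨c, hc⟩ := (Submodule.mem_span_range_iff_exists_fun ℝ).mp hp'
  set d : Fin (m + 1) → ℝ := fun i => if h : i = 0 then 0 else c ⟨i, h⟩ with hd
  have hd0 : d 0 = 0 := by simp [hd]
  have hdsum : ∑ i, d i • a i = p := by
    rw [← hc]
    rw [← Finset.sum_subset (Finset.subset_univ ({0}ᶜ : Finset (Fin (m + 1))))]
    · rw [Finset.sum_subtype (p := fun i : Fin (m + 1) => i ≠ 0) _ (by simp)]
      refine Finset.sum_congr rfl fun i _ => ?_
      simp [hd, i.2]
    · intro x _ hx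
      simp only [Finset.mem_compl, Finset.mem_singleton, not_not] at hx
      simp [hd, hx]
  -- the Gram matrix
  set G : Matrix (Fin (m + 1)) (Fin (m + 1)) ℝ :=
    Matrix.of fun i j => ⟪a i, a j⟫ with hG
  set M : Matrix (Fin (m + 1)) (Fin (m + 1)) ℝ :=
    G.updateRow 0 (fun j => ⟪v, a j⟫) with hM
  have hMrow : ∀ i : Fin (m + 1), i ≠ 0 → M i = G i := fun i hi =>
    Matrix.updateRow_ne hi
  have hGM : G = M.updateRow 0 (M 0 + ∑ k, d k • M k) := by
    ext i j
    rcases eq_or_ne i 0 with rfl | hi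
    · rw [Matrix.updateRow_self]
      have hsum : ∀ k, d k • M k j = d k * ⟪a k, a j⟫ := by
        intro k
        rcases eq_or_ne k 0 with rfl | hk
        · simp [hd0]
        · rw [hMrow k hk]; simp [hG]
      have : (∑ k, d k • M k) j = ⟪p, a j⟫ := by
        rw [← hdsum, sum_inner]
        simp only [Finset.sum_apply, Pi.smul_apply]
        exact Finset.sum_congr rfl fun k _ => by
          rw [hsum k, real_inner_smul_left]
      simp only [Pi.add_apply, this, Matrix.updateRow_self, hM]
      rw [hG]
      show ⟪a 0, a j⟫ = ⟪v, a j⟫ + (∑ k, d k • M k) j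
      rw [this, ha0, inner_add_left]
    · rw [Matrix.updateRow_ne hi, hMrow i hi]
  have hMsub : M.submatrix Fin.succ Fin.succ = G.submatrix Fin.succ Fin.succ := by
    ext i j
    simp [Matrix.submatrix_apply, hM, Matrix.updateRow_ne (Fin.succ_ne_zero i)]
  have hdetGM : G.det = M.det := by
    rw [hGM, Matrix.det_updateRow_add, Matrix.updateRow_eq_self, Matrix.det_updateRow_sum,
      hd0, zero_smul, add_zero]
  have key : G.det = ‖v‖ ^ 2 * (G.submatrix Fin.succ Fin.succ).det := by
    rw [hdetGM, Matrix.det_succ_row_zero]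
    rw [Finset.sum_eq_single 0]
    · rw [← hMsub]
      simp only [hM, Matrix.updateRow_self]
      rw [hva0]
      simp [Fin.succAbove_zero]
    · intro j _ hj
      have : M 0 j = 0 := by
        simp only [hM, Matrix.updateRow_self]
        exact hva j hj
      simp [this]
    · simp
  -- integrality: 1 ≤ det G
  choose zf hzf using hint
  set Z : Matrix (Fin (m + 1)) (Fin (m + 1)) ℤ := fun i j => ∑ k, zf i k * zf j k with hZ
  have hGZ : G = Z.map (Int.cast : ℤ → ℝ) := by
    ext i j
    simp only [hG, Matrix.map_apply, hZ, Matrix.of_apply, PiLp.inner_apply,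
      RCLike.inner_apply, conj_trivial, hzf]
    change _ = ((∑ k, zf i k * zf j k : ℤ) : ℝ)
    push_cast
    exact Finset.sum_congr rfl fun k _ => by ring
  have hdetcast : G.det = ((Z.det : ℤ) : ℝ) := by
    rw [hGZ]
    exact ((Int.castRingHom ℝ).map_det Z).symm
  have hpd : G.PosDef := by
    refine Matrix.posDef_iff_dotProduct_mulVec.mpr ⟨?_, ?_⟩
    · ext i j
      simp only [hG, Matrix.conjTranspose_apply, Matrix.of_apply, star_trivial]
      exact real_inner_comm _ _
    · intro x hx
      have hquad : dotProduct (star x) (G *ᵥ x) = ‖∑ i, x i • a i‖ ^ 2 := by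
        rw [← real_inner_self_eq_norm_sq, sum_inner]
        simp only [dotProduct, Matrix.mulVec, star_trivial]
        refine Finset.sum_congr rfl fun i _ => ?_
        rw [real_inner_smul_left, inner_sum, Finset.mul_sum, Finset.mul_sum]
        refine Finset.sum_congr rfl fun j _ => ?_
        simp only [real_inner_smul_right, hG, Matrix.of_apply]
        ring
      rw [hquad]
      have : ∑ i, x i • a i ≠ 0 := by
        intro h
        exact hx (funext fun i => Fintype.linearIndependent_iff.mp hli x h i)
      exact pow_pos (norm_pos_iff.mpr this) 2
  have hdetpos : 0 < G.det := hpd.det_pos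
  have hZ1 : (1 : ℤ) ≤ Z.det := by
    by_contra h
    push_neg at h
    have : Z.det ≤ 0 := by omega
    have : G.det ≤ 0 := by rw [hdetcast]; exact_mod_cast this
    linarith
  have hdetG1 : (1 : ℝ) ≤ G.det := by
    rw [hdetcast]; exact_mod_cast hZ1
  have hminor' : (G.submatrix Fin.succ Fin.succ).det ≤ C :=
    le_of_abs_le (hminor Fin.succ Fin.succ Fin.strictMono_succ Fin.strictMono_succ)
  have hG'pos : 0 < (G.submatrix Fin.succ Fin.succ).det := by nlinarith
  have part1 : 1 / C ≤ ‖v‖ ^ 2 := by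
    have h1 : 1 / C ≤ 1 / (G.submatrix Fin.succ Fin.succ).det :=
      one_div_le_one_div_of_le hG'pos hminor'
    have h2 : 1 / (G.submatrix Fin.succ Fin.succ).det ≤ ‖v‖ ^ 2 := by
      rw [div_le_iff₀ hG'pos]
      linarith [key]
    linarith
  clear hminor hGM hMsub hdetGM key hdetcast hZ1 hdetG1 hminor' hG'pos hdetpos hpd hGZ hzf
  clear hd0 hdsum hc hp' hMrow hd hZ hM hG M Z G d zf c
  refine ⟨part1, fun u => ?_⟩
  set s : EuclideanSpace ℝ (Fin n) := ∑ i, u i • a i with hs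
  have hin : ⟪v, s⟫ = u 0 * ‖v‖ ^ 2 := by
    rw [hs, inner_sum]
    rw [Finset.sum_eq_single 0]
    · rw [real_inner_smul_right, hva0]
    · intro j _ hj
      rw [real_inner_smul_right, hva j hj, mul_zero]
    · simp
  clear_value s
  have h1 : ⟪v, s⟫ ^ 2 ≤ ‖v‖ ^ 2 * ‖s‖ ^ 2 := by
    have := abs_real_inner_le_norm v s
    nlinarith [abs_nonneg ⟪v, s⟫, sq_abs ⟪v, s⟫, norm_nonneg v, norm_nonneg s]
  have h2 : u 0 ^ 2 * ‖v‖ ^ 2 ≤ ‖s‖ ^ 2 := by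
    have h3 : (u 0 * ‖v‖ ^ 2) ^ 2 ≤ ‖v‖ ^ 2 * ‖s‖ ^ 2 := by rw [← hin]; exact h1
    have e1 : (u 0 ^ 2 * ‖v‖ ^ 2) * ‖v‖ ^ 2 = (u 0 * ‖v‖ ^ 2) ^ 2 := by ring
    have e2 : ‖s‖ ^ 2 * ‖v‖ ^ 2 = ‖v‖ ^ 2 * ‖s‖ ^ 2 := by ring
    have h4 : (u 0 ^ 2 * ‖v‖ ^ 2) * ‖v‖ ^ 2 ≤ ‖s‖ ^ 2 * ‖v‖ ^ 2 := by rw [e1, e2]; exact h3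
    exact le_of_mul_le_mul_right h4 hvpos
  have hp1' : 1 ≤ C * ‖v‖ ^ 2 := by
    rw [div_le_iff₀ hC] at part1
    linarith
  nlinarith [h2, hp1', sq_nonneg (u 0), hC, sq_nonneg ‖s‖]
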